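/- For every t ∈ [1,2) there is a constant κ_{t,ℂ} > 0 such that for all m ≥ 1, ∏_{j=2}^m Γ(2 − (2−t)/(2+t(j−2)))^{−(2+t(j−2))/(2t(j−1))} ≤ κ_{t,ℂ} · m^{((γ−1)(t−2))/(2t)}, where γ is the Euler–Mascheroni constant. -/

import Mathlib

open Finset

/-- Tangent-line lower bound for `Γ` near `2`: `exp ((γ-1) u) ≤ Γ (2 - u)`. -/
lemma gamma_two_sub_lb (u : ℝ) (hu0 : 0 ≤ u) (hu2 : u < 2) :
    Real.exp ((Real.eulerMascheroniConstant - 1) * u) ≤ Real.Gamma (2 - u) := by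
  rcases eq_or_lt_of_le hu0 with h | h
  · simp [← h, Real.Gamma_two]
  · have hG : HasDerivAt Real.Gamma (1 - Real.eulerMascheroniConstant) 2 := by
      have := Real.hasDerivAt_Gamma_nat 1
      norm_num at this
      convert this using 1
      ring
    have hf : HasDerivAt (Real.log ∘ Real.Gamma) (1 - Real.eulerMascheroniConstant) 2 := by
      have := hG.log (by rw [Real.Gamma_two]; norm_num)
      simpa [Real.Gamma_two, Function.comp_def] using this
    have hkey := Real.convexOn_log_Gamma.slope_le_of_hasDerivAt
      (x := 2 - u) (y := 2) (by simp only [Set.mem_Ioi]; linarith)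
      (by norm_num) (by linarith) hf
    rw [slope_def_field] at hkey
    have h2 : Real.log (Real.Gamma 2) = 0 := by rw [Real.Gamma_two, Real.log_one]
    have hslope : (0 - Real.log (Real.Gamma (2 - u))) / u
        ≤ 1 - Real.eulerMascheroniConstant := by
      have h3 : (2 : ℝ) - (2 - u) = u := by ring
      simp only [Function.comp_apply] at hkey
      rw [h2, h3] at hkey
      exact hkey
    have hlog : (Real.eulerMascheroniConstant - 1) * u ≤ Real.log (Real.Gamma (2 - u)) := by
      rw [div_le_iff₀ h] at hslope
      nlinarith
    calc Real.exp ((Real.eulerMascheroniConstant - 1) * u)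
        ≤ Real.exp (Real.log (Real.Gamma (2 - u))) := Real.exp_le_exp.mpr hlog
      _ = Real.Gamma (2 - u) := Real.exp_log (Real.Gamma_pos_of_pos (by linarith))

/-- Harmonic-type sum bound. -/
lemma harmonic_shift_sum_le : ∀ n : ℕ, 1 ≤ n →
    ∑ j ∈ Finset.Icc 2 (n + 1), (1 : ℝ) / ((j : ℝ) - 1) ≤ 1 + Real.log n := by
  intro n hn
  induction n, hn using Nat.le_induction with
  | base => norm_num
  | succ n hn ih =>
    rw [Finset.sum_Icc_succ_top (by omega : 2 ≤ n + 1 + 1)]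
    have hn0 : (0 : ℝ) < n := by exact_mod_cast hn
    have hlog : Real.log ((n : ℝ) / (n + 1)) ≤ (n : ℝ) / (n + 1) - 1 :=
      Real.log_le_sub_one_of_pos (by positivity)
    rw [Real.log_div (by positivity) (by positivity)] at hlog
    have hd : (n : ℝ) / (n + 1) - 1 = -(1 / (n + 1)) := by field_simp; ring
    rw [hd] at hlog
    have : ((n + 1 + 1 : ℕ) : ℝ) - 1 = (n : ℝ) + 1 := by push_cast; ring
    rw [this]
    push_cast
    linarith

lemma sum_one_div_sub_one_le (m : ℕ) (hm : 1 ≤ m) :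
    ∑ j ∈ Finset.Icc 2 m, (1 : ℝ) / ((j : ℝ) - 1) ≤ 1 + Real.log m := by
  rcases Nat.exists_eq_add_of_le hm with ⟨n, rfl⟩
  rcases Nat.eq_zero_or_pos n with rfl | hn
  · norm_num
  · have := harmonic_shift_sum_le n hn
    have hlog : Real.log n ≤ Real.log (1 + n : ℕ) := by
      apply Real.log_le_log (by exact_mod_cast hn)
      push_cast; linarith
    calc ∑ j ∈ Finset.Icc 2 (1 + n), (1 : ℝ) / ((j : ℝ) - 1)
        = ∑ j ∈ Finset.Icc 2 (n + 1), (1 : ℝ) / ((j : ℝ) - 1) := by rw [Nat.add_comm]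
      _ ≤ 1 + Real.log n := this
      _ ≤ 1 + Real.log (1 + n : ℕ) := by linarith

/-- **Asymptotic growth of the complex Bohnenblust–Hille constants**: for every
`t ∈ [1,2)` there is `κ > 0` such that for all `m ≥ 1`,
`∏_{j=2}^m Γ(2 − (2−t)/(2+t(j−2)))^{−(2+t(j−2))/(2t(j−1))}
  ≤ κ · m^{(γ−1)(t−2)/(2t)}`, where `γ` is the Euler–Mascheroni constant. -/
theorem bohnenblust_hille_constant_asymptotic (t : ℝ) (ht1 : 1 ≤ t) (ht2 : t < 2) :
    ∃ κ : ℝ, 0 < κ ∧ ∀ m : ℕ, 1 ≤ m →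
      ∏ j ∈ Finset.Icc 2 m,
          Real.Gamma (2 - (2 - t) / (2 + t * ((j : ℝ) - 2))) ^
            (-((2 + t * ((j : ℝ) - 2)) / (2 * t * ((j : ℝ) - 1)))) ≤
        κ * (m : ℝ) ^ ((Real.eulerMascheroniConstant - 1) * (t - 2) / (2 * t)) := by
  set γ := Real.eulerMascheroniConstant with hγdef
  have hγ1 : γ < 1 := by
    have := Real.eulerMascheroniConstant_lt_two_thirds
    rw [← hγdef] at this; linarith
  have ht0 : 0 < t := by linarith
  set ε : ℝ := (γ - 1) * (t - 2) / (2 * t) with hε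
  have hε0 : 0 ≤ ε := by
    apply div_nonneg _ (by linarith)
    nlinarith
  refine ⟨Real.exp ε, Real.exp_pos ε, fun m hm => ?_⟩
  -- pointwise bound on each factor
  have hfac : ∀ j ∈ Finset.Icc 2 m,
      Real.Gamma (2 - (2 - t) / (2 + t * ((j : ℝ) - 2))) ^
          (-((2 + t * ((j : ℝ) - 2)) / (2 * t * ((j : ℝ) - 1)))) ≤
        Real.exp (ε * (1 / ((j : ℝ) - 1))) := by
    intro j hj
    have hj2 : 2 ≤ j := (Finset.mem_Icc.mp hj).1
    have hj2' : (2 : ℝ) ≤ (j : ℝ) := by exact_mod_cast hj2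
    have hD : (0 : ℝ) < 2 + t * ((j : ℝ) - 2) := by nlinarith
    set u : ℝ := (2 - t) / (2 + t * ((j : ℝ) - 2)) with hu
    have hu0 : 0 ≤ u := div_nonneg (by linarith) hD.le
    have hu2 : u < 2 := by
      rw [hu, div_lt_iff₀ hD]; nlinarith
    set e : ℝ := (2 + t * ((j : ℝ) - 2)) / (2 * t * ((j : ℝ) - 1)) with he
    have hden : (0 : ℝ) < 2 * t * ((j : ℝ) - 1) := by nlinarith
    have he0 : 0 < e := by positivity
    have hlb := gamma_two_sub_lb u hu0 hu2
    have hmono : Real.Gamma (2 - u) ^ (-e) ≤ (Real.exp ((γ - 1) * u)) ^ (-e) :=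
      Real.rpow_le_rpow_of_nonpos (Real.exp_pos _) hlb (by linarith)
    have hcalc : (Real.exp ((γ - 1) * u)) ^ (-e) = Real.exp (ε * (1 / ((j : ℝ) - 1))) := by
      rw [← Real.exp_mul]
      congr 1
      rw [hu, he, hε]
      field_simp
      ring
    calc Real.Gamma (2 - u) ^ (-e) ≤ (Real.exp ((γ - 1) * u)) ^ (-e) := hmono
      _ = Real.exp (ε * (1 / ((j : ℝ) - 1))) := hcalc
  have hprod : ∏ j ∈ Finset.Icc 2 m,
      Real.Gamma (2 - (2 - t) / (2 + t * ((j : ℝ) - 2))) ^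
          (-((2 + t * ((j : ℝ) - 2)) / (2 * t * ((j : ℝ) - 1)))) ≤
      ∏ j ∈ Finset.Icc 2 m, Real.exp (ε * (1 / ((j : ℝ) - 1))) := by
    apply Finset.prod_le_prod _ hfac
    intro j hj
    have hj2 : 2 ≤ j := (Finset.mem_Icc.mp hj).1
    have hj2' : (2 : ℝ) ≤ (j : ℝ) := by exact_mod_cast hj2
    have hD : (0 : ℝ) < 2 + t * ((j : ℝ) - 2) := by nlinarith
    have hG : 0 < Real.Gamma (2 - (2 - t) / (2 + t * ((j : ℝ) - 2))) := by
      apply Real.Gamma_pos_of_pos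
      have : (2 - t) / (2 + t * ((j : ℝ) - 2)) < 2 := by
        rw [div_lt_iff₀ hD]; nlinarith
      linarith
    positivity
  have hexp : ∏ j ∈ Finset.Icc 2 m, Real.exp (ε * (1 / ((j : ℝ) - 1))) =
      Real.exp (ε * ∑ j ∈ Finset.Icc 2 m, (1 : ℝ) / ((j : ℝ) - 1)) := by
    rw [← Real.exp_sum, Finset.mul_sum]
  have hsum := sum_one_div_sub_one_le m hm
  have hm0 : (0 : ℝ) < m := by exact_mod_cast hm
  have hfin : Real.exp (ε * ∑ j ∈ Finset.Icc 2 m, (1 : ℝ) / ((j : ℝ) - 1)) ≤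
      Real.exp ε * (m : ℝ) ^ ε := by
    rw [Real.rpow_def_of_pos hm0, ← Real.exp_add]
    apply Real.exp_le_exp.mpr
    have := mul_le_mul_of_nonneg_left hsum hε0
    nlinarith [Real.log_natCast_nonneg m]
  calc ∏ j ∈ Finset.Icc 2 m,
        Real.Gamma (2 - (2 - t) / (2 + t * ((j : ℝ) - 2))) ^
          (-((2 + t * ((j : ℝ) - 2)) / (2 * t * ((j : ℝ) - 1))))
      ≤ ∏ j ∈ Finset.Icc 2 m, Real.exp (ε * (1 / ((j : ℝ) - 1))) := hprod
    _ = Real.exp (ε * ∑ j ∈ Finset.Icc 2 m, (1 : ℝ) / ((j : ℝ) - 1)) := hexp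
    _ ≤ Real.exp ε * (m : ℝ) ^ ε := hfin
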